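/- arXiv:2311.05385 — 2 statements merged into one kernel-verified Lean document; each statement's English description precedes it below -/
import Mathlib

section
/- Let c > 0 and let B : [0,1) → ℝ be continuous with B(0) = 1, differentiable on (0,1) with Ḃ(η) ≤ 0 and 1 − η ≤ B(η) ≤ 1 for all η ∈ (0,1), and satisfying Ḃ(η) = c²·(1 − η − B(η))/(g(η)·h(B(η))·f(η,B(η))) for all η ∈ (0,1). Then lim_{η→0⁺} Ḃ(η) = −1; in particular B has right derivative −1 at 0. -/
open MeasureTheory Filter Set Topology

noncomputable section

/-- Assumptions (A1)-(A3) on the reaction `f` and the diffusivities `g`, `h`. -/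
structure Assumptions (f : ℝ → ℝ → ℝ) (g h : ℝ → ℝ) (L1 L2 Mg : ℝ) : Prop where
  L1_pos : 0 < L1
  L1_le_L2 : L1 ≤ L2
  f_C1 : ContDiffOn ℝ 1 (fun p : ℝ × ℝ => f p.1 p.2) (Icc 0 1 ×ˢ Icc 0 1)
  f_nonneg : ∀ s ∈ Icc (0:ℝ) 1, ∀ r ∈ Icc (0:ℝ) 1, 0 ≤ f s r
  f_zero_iff : ∀ s ∈ Icc (0:ℝ) 1, ∀ r ∈ Icc (0:ℝ) 1, (f s r = 0 ↔ s = 0 ∨ r = 0)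
  f_lower : ∀ s ∈ Ioo (0:ℝ) 1, ∀ r ∈ Ioo (0:ℝ) 1, L1 * (s * r) ≤ f s r
  f_upper : ∀ s ∈ Ioo (0:ℝ) 1, ∀ r ∈ Ioo (0:ℝ) 1, f s r ≤ L2 * (s * r)
  g_C1 : ContDiffOn ℝ 1 g (Icc 0 1)
  g_nonneg : ∀ s ∈ Icc (0:ℝ) 1, 0 ≤ g s
  g_zero_iff : ∀ s ∈ Icc (0:ℝ) 1, (g s = 0 ↔ s = 0)
  g_deriv0_pos : 0 < derivWithin g (Icc 0 1) 0
  Mg_pos : 0 < Mg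
  g_lower : ∀ s₁ s : ℝ, 0 ≤ s₁ → s₁ ≤ s → s ≤ 1 → Mg * g s₁ ≤ g s
  h_C1 : ContDiffOn ℝ 1 h (Icc 0 1)
  h_nonneg : ∀ r ∈ Icc (0:ℝ) 1, 0 ≤ h r
  h_zero_iff : ∀ r ∈ Icc (0:ℝ) 1, (h r = 0 ↔ r = 0)
  h_deriv0_pos : 0 < derivWithin h (Icc 0 1) 0

/-- A traveling wave of system (1) with speed `c`: profile `(η, β)` with values in `[0,1]`,
`η` of class `C¹` solving `c·η' = f(η,β)` and `β` continuous, a.e. differentiable,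
with `h(β)·β' ∈ L¹_loc` solving the second equation weakly. -/
structure IsTravelingWave (f : ℝ → ℝ → ℝ) (g h : ℝ → ℝ) (c : ℝ) (η β : ℝ → ℝ) : Prop where
  eta_mem : ∀ ξ : ℝ, η ξ ∈ Icc (0:ℝ) 1
  beta_mem : ∀ ξ : ℝ, β ξ ∈ Icc (0:ℝ) 1
  eta_C1 : ContDiff ℝ 1 η
  eta_eq : ∀ ξ : ℝ, c * deriv η ξ = f (η ξ) (β ξ)
  beta_cont : Continuous β
  beta_diff_ae : ∀ᵐ ξ ∂(volume : Measure ℝ), DifferentiableAt ℝ β ξ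
  beta_loc_int : LocallyIntegrable (fun ξ : ℝ => h (β ξ) * deriv β ξ) volume
  weak_eq : ∀ ψ : ℝ → ℝ, ContDiff ℝ (⊤ : ℕ∞) ψ → HasCompactSupport ψ →
    (∫ ξ : ℝ, ((g (η ξ) * h (β ξ) * deriv β ξ + c * β ξ) * deriv ψ ξ
       - f (η ξ) (β ξ) * ψ ξ)) = 0

/-- Boundary condition at `-∞`: `(η,β) → (0,1)`. -/
def BCneg (η β : ℝ → ℝ) : Prop := Tendsto η atBot (𝓝 0) ∧ Tendsto β atBot (𝓝 1)

/-- Boundary condition at `+∞`: `(η,β) → (1,0)`. -/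
def BCpos (η β : ℝ → ℝ) : Prop := Tendsto η atTop (𝓝 1) ∧ Tendsto β atTop (𝓝 0)

/-- A traveling wave is classical if `β` is twice continuously differentiable on `ℝ`. -/
def IsClassicalWave (β : ℝ → ℝ) : Prop := ContDiff ℝ 2 β

/-- A traveling wave is sharp at `l` if `β` attains `l` at some `ξl`, is `C²` away from `ξl`
and is not differentiable at `ξl`. -/
def IsSharpAt (β : ℝ → ℝ) (l : ℝ) : Prop :=
  ∃ ξl : ℝ, β ξl = l ∧ ContDiffOn ℝ 2 β ({ξl}ᶜ) ∧ ¬ DifferentiableAt ℝ β ξl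

/-- A wavefront: a traveling wave satisfying the boundary conditions whose components are
non-constant monotone functions. -/
def IsWavefront (f : ℝ → ℝ → ℝ) (g h : ℝ → ℝ) (c : ℝ) (η β : ℝ → ℝ) : Prop :=
  IsTravelingWave f g h c η β ∧ BCneg η β ∧ BCpos η β ∧
  Monotone η ∧ Antitone β ∧ (∃ a b : ℝ, η a ≠ η b) ∧ (∃ a b : ℝ, β a ≠ β b)

/-- The lower threshold estimate `c_♯`. -/
def cSharp (g h : ℝ → ℝ) (L1 Mg : ℝ) : ℝ :=
  max (Real.sqrt (L1 * Mg * ∫ r in (0:ℝ)..1, g (1 - r) * h r * r))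
      (Real.sqrt (2 * L1 * Mg * ∫ r in (0:ℝ)..1, (1 - r) * g (1 - r) * h r * r))

/-- The upper threshold estimate `c_*`. -/
def cStar (g h : ℝ → ℝ) (L2 : ℝ) : ℝ :=
  2 * Real.sqrt (L2 * sSup (g '' Icc 0 1) * sSup ((fun r => h r / r) '' Ioc 0 1))

/-- Barrier lemma. -/
lemma barrier_le {w w' : ℝ → ℝ} {b : ℝ}
    (hcont : ContinuousOn w (Icc 0 b)) (h0 : w 0 ≤ 0)
    (hder : ∀ x ∈ Ioo 0 b, HasDerivAt w (w' x) x)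
    (hneg : ∀ x ∈ Ioo 0 b, 0 ≤ w x → w' x < 0) :
    ∀ x ∈ Ioc 0 b, w x ≤ 0 := by
  intro x₁ hx₁
  by_contra hpos
  push_neg at hpos
  set s : Set ℝ := Icc 0 x₁ ∩ w ⁻¹' (Iic 0) with hs
  have hsub : Icc 0 x₁ ⊆ Icc 0 b := Icc_subset_Icc le_rfl hx₁.2
  have hclosed : IsClosed s :=
    (hcont.mono hsub).preimage_isClosed_of_isClosed isClosed_Icc isClosed_Iic
  have hscomp : IsCompact s :=
    isCompact_Icc.of_isClosed_subset hclosed inter_subset_left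
  have hne : s.Nonempty := ⟨0, ⟨le_rfl, hx₁.1.le⟩, h0⟩
  set m := sSup s with hm
  have hms : m ∈ s := hscomp.sSup_mem hne
  have hm0 : 0 ≤ m := hms.1.1
  have hmx : m < x₁ := by
    rcases lt_or_eq_of_le hms.1.2 with hlt | heq
    · exact hlt
    · exfalso; have := hms.2; rw [heq] at this; exact absurd this (not_le.mpr hpos)
  have hwpos : ∀ y ∈ Ioc m x₁, 0 < w y := by
    intro y hy
    by_contra hy'
    push_neg at hy'
    have : y ∈ s := ⟨⟨hm0.trans hy.1.le, hy.2⟩, hy'⟩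
    exact absurd (le_csSup hscomp.bddAbove this) (not_le.mpr hy.1)
  have hanti : StrictAntiOn w (Icc m x₁) := by
    apply strictAntiOn_of_deriv_neg (convex_Icc m x₁)
      (hcont.mono (Icc_subset_Icc hm0 hx₁.2))
    intro y hy
    rw [interior_Icc] at hy
    have hyI : y ∈ Ioo 0 b := ⟨hm0.trans_lt hy.1, hy.2.trans_le hx₁.2⟩
    rw [(hder y hyI).deriv]
    exact hneg y hyI (hwpos y ⟨hy.1, hy.2.le⟩).le
  have := hanti (left_mem_Icc.mpr hmx.le) (right_mem_Icc.mpr hmx.le) hmx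
  have hm2 := hms.2
  simp only [mem_preimage, mem_Iic] at hm2
  linarith [hwpos x₁ ⟨hmx, le_rfl⟩]

lemma slice_deriv {f : ℝ → ℝ → ℝ}
    (hf : ContDiffOn ℝ 1 (fun p : ℝ × ℝ => f p.1 p.2) (Icc 0 1 ×ˢ Icc 0 1))
    {r : ℝ} (hr : r ∈ Icc (0:ℝ) 1) {s : ℝ} (hs : s ∈ Ioo (0:ℝ) 1) :
    HasDerivAt (fun t => f t r)
      (fderivWithin ℝ (fun p : ℝ × ℝ => f p.1 p.2) (Icc 0 1 ×ˢ Icc 0 1) (s, r) (1, 0)) s := by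
  set S : Set (ℝ × ℝ) := Icc 0 1 ×ˢ Icc 0 1 with hS
  set F : ℝ × ℝ → ℝ := fun p => f p.1 p.2 with hF
  have hsr : (s, r) ∈ S := ⟨⟨hs.1.le, hs.2.le⟩, hr⟩
  have hFd : HasFDerivWithinAt F (fderivWithin ℝ F S (s, r)) S (s, r) :=
    ((hf.differentiableOn one_ne_zero) (s, r) hsr).hasFDerivWithinAt
  have hι : HasDerivWithinAt (fun t : ℝ => (t, r)) ((1 : ℝ), (0 : ℝ)) (Ioo 0 1) s :=
    ((hasDerivAt_id s).prodMk (hasDerivAt_const s r)).hasDerivWithinAt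
  have hmap : MapsTo (fun t : ℝ => (t, r)) (Ioo 0 1) S := by
    intro t ht; exact ⟨⟨ht.1.le, ht.2.le⟩, hr⟩
  have := hFd.comp_hasDerivWithinAt s hι hmap
  exact this.hasDerivAt (Ioo_mem_nhds hs.1 hs.2)

lemma slice_mvt {f : ℝ → ℝ → ℝ}
    (hf : ContDiffOn ℝ 1 (fun p : ℝ × ℝ => f p.1 p.2) (Icc 0 1 ×ˢ Icc 0 1))
    (hf0 : ∀ r ∈ Icc (0:ℝ) 1, f 0 r = 0)
    {x : ℝ} (hx : x ∈ Ioo (0:ℝ) 1) {r : ℝ} (hr : r ∈ Icc (0:ℝ) 1) :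
    ∃ θ ∈ Ioo 0 x,
      f x r = fderivWithin ℝ (fun p : ℝ × ℝ => f p.1 p.2) (Icc 0 1 ×ˢ Icc 0 1) (θ, r) (1, 0) * x := by
  have hcont : ContinuousOn (fun t => f t r) (Icc 0 x) := by
    have hmap : MapsTo (fun t : ℝ => (t, r)) (Icc 0 x) (Icc 0 1 ×ˢ Icc 0 1) := by
      intro t ht; exact ⟨⟨ht.1, ht.2.trans hx.2.le⟩, hr⟩
    exact (hf.continuousOn.comp (continuous_id.prodMk continuous_const).continuousOn hmap :)
  obtain ⟨θ, hθ, hθeq⟩ := exists_hasDerivAt_eq_slope (fun t => f t r)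
    (fun t => fderivWithin ℝ (fun p : ℝ × ℝ => f p.1 p.2) (Icc 0 1 ×ˢ Icc 0 1) (t, r) (1, 0))
    hx.1 hcont
    (fun t ht => slice_deriv hf hr ⟨ht.1, ht.2.trans hx.2⟩)
  refine ⟨θ, hθ, ?_⟩
  have hx0 : x ≠ 0 := ne_of_gt hx.1
  rw [hθeq, hf0 r hr]
  field_simp
  ring


set_option maxHeartbeats 1000000 in
/-- Lemma 4.2: for the solution `B` of the singular first-order problem
`Ḃ = c²(1−η−B)/(g(η)h(B)f(η,B))`, `B(0) = 1`, one has `Ḃ(0⁺) = −1`; in particular `B`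
has right derivative `−1` at `0`. -/
theorem statement14
    (f : ℝ → ℝ → ℝ) (g h : ℝ → ℝ) (L1 L2 Mg : ℝ)
    (A : Assumptions f g h L1 L2 Mg)
    (c : ℝ) (hc : 0 < c)
    (B : ℝ → ℝ) (hBcont : ContinuousOn B (Ico 0 1)) (hB0 : B 0 = 1)
    (hODE : ∀ x ∈ Ioo (0:ℝ) 1,
      HasDerivAt B (c ^ 2 * (1 - x - B x) / (g x * h (B x) * f x (B x))) x)
    (hBder : ∀ x ∈ Ioo (0:ℝ) 1, deriv B x ≤ 0)
    (hBbd : ∀ x ∈ Ioo (0:ℝ) 1, 1 - x ≤ B x ∧ B x ≤ 1) :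
    Tendsto (deriv B) (nhdsWithin 0 (Ioi 0)) (𝓝 (-1)) ∧
    HasDerivWithinAt B (-1) (Ici 0) 0 := by
  have h1mem : (1:ℝ) ∈ Icc (0:ℝ) 1 := ⟨zero_le_one, le_rfl⟩
  have h0mem : (0:ℝ) ∈ Icc (0:ℝ) 1 := ⟨le_rfl, zero_le_one⟩
  have hf0 : ∀ r ∈ Icc (0:ℝ) 1, f 0 r = 0 := fun r hr =>
    (A.f_zero_iff 0 h0mem r hr).mpr (Or.inl rfl)
  have hh1 : 0 < h 1 := by
    rcases lt_or_eq_of_le (A.h_nonneg 1 h1mem) with hlt | heq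
    · exact hlt
    · exact absurd ((A.h_zero_iff 1 h1mem).mp heq.symm) one_ne_zero
  have hBIcc : ∀ x ∈ Ioo (0:ℝ) 1, B x ∈ Icc (0:ℝ) 1 := by
    intro x hx
    obtain ⟨h1, h2⟩ := hBbd x hx
    exact ⟨by linarith [hx.2], h2⟩
  have hBpos : ∀ x ∈ Ioo (0:ℝ) 1, 0 < B x := by
    intro x hx; obtain ⟨h1, _⟩ := hBbd x hx; linarith [hx.2]
  have hDpos : ∀ x ∈ Ioo (0:ℝ) 1, 0 < g x * h (B x) * f x (B x) := by
    intro x hx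
    have hxI : x ∈ Icc (0:ℝ) 1 := ⟨hx.1.le, hx.2.le⟩
    have hgx : 0 < g x := by
      rcases lt_or_eq_of_le (A.g_nonneg x hxI) with hlt | heq
      · exact hlt
      · exact absurd ((A.g_zero_iff x hxI).mp heq.symm) (ne_of_gt hx.1)
    have hhx : 0 < h (B x) := by
      rcases lt_or_eq_of_le (A.h_nonneg _ (hBIcc x hx)) with hlt | heq
      · exact hlt
      · exact absurd ((A.h_zero_iff _ (hBIcc x hx)).mp heq.symm) (ne_of_gt (hBpos x hx))
    have hfx : 0 < f x (B x) := by
      rcases lt_or_eq_of_le (A.f_nonneg x hxI _ (hBIcc x hx)) with hlt | heq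
      · exact hlt
      · rcases (A.f_zero_iff x hxI _ (hBIcc x hx)).mp heq.symm with h' | h'
        · exact absurd h' (ne_of_gt hx.1)
        · exact absurd h' (ne_of_gt (hBpos x hx))
    positivity
  have hev : Ioo (0:ℝ) 1 ∈ 𝓝[>] (0:ℝ) := Ioo_mem_nhdsGT zero_lt_one
  -- limit of B at 0⁺
  have hBlim : Tendsto B (𝓝[>] (0:ℝ)) (𝓝 1) := by
    have h1 : Tendsto B (𝓝[Ico 0 1] (0:ℝ)) (𝓝 1) := by
      have := (hBcont 0 ⟨le_rfl, zero_lt_one⟩).tendsto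
      rwa [hB0] at this
    refine h1.mono_left ?_
    rw [← nhdsWithin_Ioo_eq_nhdsGT (zero_lt_one (α := ℝ))]
    exact nhdsWithin_mono _ Ioo_subset_Ico_self
  -- continuity of the partial derivative
  set φ : ℝ × ℝ → ℝ :=
    fun p => fderivWithin ℝ (fun p : ℝ × ℝ => f p.1 p.2) (Icc 0 1 ×ˢ Icc 0 1) p (1, 0) with hφdef
  have hSu : UniqueDiffOn ℝ ((Icc 0 1 ×ˢ Icc 0 1 : Set (ℝ × ℝ))) :=
    (uniqueDiffOn_Icc zero_lt_one).prod (uniqueDiffOn_Icc zero_lt_one)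
  have hφcont : ContinuousOn φ (Icc 0 1 ×ˢ Icc 0 1) := by
    have h1 := A.f_C1.continuousOn_fderivWithin hSu le_rfl
    exact (ContinuousLinearMap.apply ℝ ℝ ((1:ℝ), (0:ℝ))).continuous.comp_continuousOn h1
  set d2 : ℝ := φ (0, 1) with hd2def
  have hφc01 : ContinuousWithinAt φ (Icc 0 1 ×ˢ Icc 0 1) (0, 1) :=
    hφcont.continuousWithinAt ⟨h0mem, h1mem⟩
  -- general limit of f x (R x) / x
  have hlim : ∀ R : ℝ → ℝ, (∀ x ∈ Ioo (0:ℝ) 1, R x ∈ Icc (0:ℝ) 1) →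
      Tendsto R (𝓝[>] (0:ℝ)) (𝓝 1) →
      Tendsto (fun x => f x (R x) / x) (𝓝[>] (0:ℝ)) (𝓝 d2) := by
    intro R hRmem hRlim
    have H : ∀ x ∈ Ioo (0:ℝ) 1, ∃ θ ∈ Ioo 0 x, f x (R x) = φ (θ, R x) * x :=
      fun x hx => slice_mvt A.f_C1 hf0 hx (hRmem x hx)
    choose! Θ hΘ1 hΘ2 using H
    have hΘlim : Tendsto Θ (𝓝[>] (0:ℝ)) (𝓝 0) := by
      apply tendsto_of_tendsto_of_tendsto_of_le_of_le' tendsto_const_nhds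
        (tendsto_id.mono_left nhdsWithin_le_nhds)
      · filter_upwards [hev] with x hx; exact (hΘ1 x hx).1.le
      · filter_upwards [hev] with x hx; exact (hΘ1 x hx).2.le
    have hpair : Tendsto (fun x => (Θ x, R x)) (𝓝[>] (0:ℝ))
        (𝓝[(Icc 0 1 ×ˢ Icc 0 1 : Set (ℝ × ℝ))] ((0:ℝ), (1:ℝ))) := by
      rw [tendsto_nhdsWithin_iff]
      constructor
      · exact hΘlim.prodMk_nhds hRlim
      · filter_upwards [hev] with x hx
        exact ⟨⟨(hΘ1 x hx).1.le, ((hΘ1 x hx).2.trans hx.2).le⟩, hRmem x hx⟩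
    have hcomp : Tendsto (fun x => φ (Θ x, R x)) (𝓝[>] (0:ℝ)) (𝓝 d2) :=
      hφc01.tendsto.comp hpair
    apply hcomp.congr'
    filter_upwards [hev] with x hx
    have hx0 : x ≠ 0 := ne_of_gt hx.1
    rw [hΘ2 x hx]
    field_simp
  have hc1 : Tendsto (fun x => f x (B x) / x) (𝓝[>] (0:ℝ)) (𝓝 d2) := hlim B hBIcc hBlim
  -- d2 ≥ L1 > 0
  have hd2L1 : L1 ≤ d2 := by
    have hmem : ∀ x ∈ Ioo (0:ℝ) 1, (1 - x : ℝ) ∈ Icc (0:ℝ) 1 := by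
      intro x hx; constructor <;> [linarith [hx.2]; linarith [hx.1]]
    have hlim1 : Tendsto (fun x : ℝ => 1 - x) (𝓝[>] (0:ℝ)) (𝓝 1) := by
      have : Tendsto (fun x : ℝ => 1 - x) (𝓝 (0:ℝ)) (𝓝 (1 - 0)) :=
        tendsto_const_nhds.sub tendsto_id
      simpa using this.mono_left nhdsWithin_le_nhds
    have hQ := hlim (fun x => 1 - x) hmem hlim1
    have hL : Tendsto (fun x : ℝ => L1 * (1 - x)) (𝓝[>] (0:ℝ)) (𝓝 L1) := by
      have : Tendsto (fun x : ℝ => L1 * (1 - x)) (𝓝 (0:ℝ)) (𝓝 (L1 * (1 - 0))) :=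
        tendsto_const_nhds.mul (tendsto_const_nhds.sub tendsto_id)
      simpa using this.mono_left nhdsWithin_le_nhds
    refine le_of_tendsto_of_tendsto hL hQ ?_
    filter_upwards [hev] with x hx
    have h1x : (1 - x : ℝ) ∈ Ioo (0:ℝ) 1 := ⟨by linarith [hx.2], by linarith [hx.1]⟩
    have := A.f_lower x hx (1 - x) h1x
    rw [le_div_iff₀ hx.1]
    nlinarith
  have hd2pos : 0 < d2 := lt_of_lt_of_le A.L1_pos hd2L1
  -- limit of g x / x
  have hgd : HasDerivWithinAt g (derivWithin g (Icc 0 1) 0) (Icc 0 1) 0 :=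
    (A.g_C1.differentiableOn one_ne_zero 0 h0mem).hasDerivWithinAt
  have hg0 : g 0 = 0 := (A.g_zero_iff 0 h0mem).mpr rfl
  have hglim : Tendsto (fun x => g x / x) (𝓝[>] (0:ℝ)) (𝓝 (derivWithin g (Icc 0 1) 0)) := by
    have h1 := hasDerivWithinAt_iff_tendsto_slope.mp hgd
    have h2 : 𝓝[>] (0:ℝ) ≤ 𝓝[Icc 0 1 \ {0}] (0:ℝ) := by
      rw [← nhdsWithin_Ioo_eq_nhdsGT (zero_lt_one (α := ℝ))]
      apply nhdsWithin_mono
      intro x hx; exact ⟨⟨hx.1.le, hx.2.le⟩, ne_of_gt hx.1⟩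
    apply (h1.mono_left h2).congr'
    filter_upwards [hev] with x hx
    rw [slope_def_field, hg0]
    rw [div_eq_div_iff (by simpa using ne_of_gt hx.1) (ne_of_gt hx.1)]
    ring
  -- limit of h (B x)
  have hhlim : Tendsto (fun x => h (B x)) (𝓝[>] (0:ℝ)) (𝓝 (h 1)) := by
    have hhc : ContinuousWithinAt h (Icc 0 1) 1 := A.h_C1.continuousOn.continuousWithinAt h1mem
    apply hhc.tendsto.comp
    rw [tendsto_nhdsWithin_iff]
    exact ⟨hBlim, by filter_upwards [hev] with x hx; exact hBIcc x hx⟩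
  set d : ℝ := derivWithin g (Icc 0 1) 0 * h 1 * d2 with hddef
  have hdpos : 0 < d := mul_pos (mul_pos A.g_deriv0_pos hh1) hd2pos
  have hP : Tendsto (fun x => g x / x * h (B x) * (f x (B x) / x)) (𝓝[>] (0:ℝ)) (𝓝 d) :=
    (hglim.mul hhlim).mul hc1
  have hc2 : (0:ℝ) < c ^ 2 := by positivity
  -- the key quantitative estimate
  have key : ∀ ε : ℝ, 0 < ε → ε < 1/2 → ∃ b : ℝ, 0 < b ∧ b ≤ 1/2 ∧ ∀ x ∈ Ioo (0:ℝ) b,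
      (B x - 1 + x ≤ (1+ε)^2*d/c^2 * x^2) ∧ |deriv B x + 1| ≤ 8*ε := by
    intro ε hε hε2
    have hγp : (0:ℝ) < (1+ε)^2*d/c^2 := by positivity
    have hγm : (0:ℝ) < (1-ε)^2*d/c^2 := by
      have : (0:ℝ) < (1-ε)^2 := by nlinarith
      positivity
    have hPev : ∀ᶠ x in 𝓝[>] (0:ℝ),
        |g x / x * h (B x) * (f x (B x) / x) - d| < ε * d := by
      have h1 := Metric.tendsto_nhds.mp hP (ε * d) (mul_pos hε hdpos)
      simpa [Real.dist_eq] using h1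
    obtain ⟨b₀, hb₀, hbsub⟩ := mem_nhdsGT_iff_exists_Ioo_subset.mp hPev
    set b : ℝ := min b₀ (min (1/2) (ε / (2 * ((1-ε)^2*d/c^2)))) with hbdef
    have hbpos : 0 < b := lt_min hb₀ (lt_min (by norm_num) (div_pos hε (by positivity)))
    have hb12 : b ≤ 1/2 := le_trans (min_le_right _ _) (min_le_left _ _)
    have hbε : b ≤ ε / (2 * ((1-ε)^2*d/c^2)) := le_trans (min_le_right _ _) (min_le_right _ _)
    refine ⟨b, hbpos, hb12, ?_⟩
    -- pointwise bounds on the denominator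
    have hfacts : ∀ x ∈ Ioo (0:ℝ) b, x ∈ Ioo (0:ℝ) 1 ∧
        (1-ε)*d*x^2 ≤ g x * h (B x) * f x (B x) ∧
        g x * h (B x) * f x (B x) ≤ (1+ε)*d*x^2 := by
      intro x hx
      have hxI : x ∈ Ioo (0:ℝ) 1 := ⟨hx.1, by linarith [hx.2, hb12]⟩
      have hx0 : x ≠ 0 := ne_of_gt hx.1
      have hmem := hbsub ⟨hx.1, lt_of_lt_of_le hx.2 (min_le_left _ _)⟩
      simp only [mem_setOf_eq] at hmem
      rw [abs_lt] at hmem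
      have hDeq : g x * h (B x) * f x (B x)
          = (g x / x * h (B x) * (f x (B x) / x)) * x^2 := by
        have e1 : g x / x * h (B x) * (f x (B x) / x) * x^2
            = g x * h (B x) * f x (B x) * (x*x) / (x*x) := by ring
        rw [e1, mul_div_assoc, div_self (by positivity : x*x ≠ (0:ℝ)), mul_one]
      refine ⟨hxI, ?_, ?_⟩
      · rw [hDeq]; nlinarith [sq_nonneg x, hmem.1]
      · rw [hDeq]; nlinarith [sq_nonneg x, hmem.2]
    -- derivative of u(x) = B x - 1 + x
    have hud : ∀ x ∈ Ioo (0:ℝ) 1, HasDerivAt (fun y => B y - 1 + y)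
        (1 - c^2 * (B x - 1 + x) / (g x * h (B x) * f x (B x))) x := by
      intro x hx
      have H : HasDerivAt (fun y => B y - 1 + y)
          (c ^ 2 * (1 - x - B x) / (g x * h (B x) * f x (B x)) + 1) x :=
        ((hODE x hx).sub_const 1).add (hasDerivAt_id x)
      have e : c ^ 2 * (1 - x - B x) / (g x * h (B x) * f x (B x)) + 1
          = 1 - c^2 * (B x - 1 + x) / (g x * h (B x) * f x (B x)) := by ring
      rwa [e] at H
    -- upper barrier : u ≤ γp x²
    have hupper : ∀ x ∈ Ioo (0:ℝ) b, B x - 1 + x ≤ (1+ε)^2*d/c^2 * x^2 := by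
      intro x₁ hx₁
      have hx₁1 : x₁ < 1 := by linarith [hx₁.2, hb12]
      have hres := barrier_le (w := fun y => B y - 1 + y - (1+ε)^2*d/c^2 * y^2)
        (w' := fun y => (1 - c^2 * (B y - 1 + y) / (g y * h (B y) * f y (B y)))
          - (1+ε)^2*d/c^2 * (2 * y^(2-1))) (b := x₁)
        ?_ ?_ ?_ ?_
      · have := hres x₁ ⟨hx₁.1, le_rfl⟩
        linarith
      · have hBc : ContinuousOn B (Icc 0 x₁) :=
          hBcont.mono (fun y hy => ⟨hy.1, lt_of_le_of_lt hy.2 hx₁1⟩)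
        exact ((hBc.sub continuousOn_const).add continuousOn_id).sub
          (continuousOn_const.mul ((continuous_pow 2).continuousOn))
      · simp [hB0]
      · intro y hy
        have hyI : y ∈ Ioo (0:ℝ) 1 := ⟨hy.1, lt_trans hy.2 hx₁1⟩
        exact (hud y hyI).sub ((hasDerivAt_pow 2 y).const_mul ((1+ε)^2*d/c^2))
      · intro y hy hwy
        have hyb : y ∈ Ioo (0:ℝ) b := ⟨hy.1, lt_trans hy.2 hx₁.2⟩
        obtain ⟨hyI, hD1, hD2⟩ := hfacts y hyb
        have hDp := hDpos y hyI
        have hu : (1+ε)^2*d/c^2 * y^2 ≤ B y - 1 + y := by linarith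
        have ht : 1 + ε ≤ c^2 * (B y - 1 + y) / (g y * h (B y) * f y (B y)) := by
          rw [le_div_iff₀ hDp]
          have h1 : c^2 * ((1+ε)^2*d/c^2 * y^2) ≤ c^2 * (B y - 1 + y) := by
            apply mul_le_mul_of_nonneg_left hu hc2.le
          have h2 : c^2 * ((1+ε)^2*d/c^2 * y^2) = (1+ε)^2 * d * y^2 := by
            field_simp
          nlinarith [sq_nonneg y]
        simp only [show (2:ℕ)-1 = 1 from rfl, pow_one]
        nlinarith [mul_pos (mul_pos hγp two_pos) hy.1]
    -- lower barrier : γm x² ≤ u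
    have hlower : ∀ x ∈ Ioo (0:ℝ) b, (1-ε)^2*d/c^2 * x^2 ≤ B x - 1 + x := by
      intro x₁ hx₁
      have hx₁1 : x₁ < 1 := by linarith [hx₁.2, hb12]
      have hres := barrier_le (w := fun y => (1-ε)^2*d/c^2 * y^2 - (B y - 1 + y))
        (w' := fun y => (1-ε)^2*d/c^2 * (2 * y^(2-1))
          - (1 - c^2 * (B y - 1 + y) / (g y * h (B y) * f y (B y)))) (b := x₁)
        ?_ ?_ ?_ ?_
      · have := hres x₁ ⟨hx₁.1, le_rfl⟩
        linarith
      · have hBc : ContinuousOn B (Icc 0 x₁) :=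
          hBcont.mono (fun y hy => ⟨hy.1, lt_of_le_of_lt hy.2 hx₁1⟩)
        exact (continuousOn_const.mul ((continuous_pow 2).continuousOn)).sub
          ((hBc.sub continuousOn_const).add continuousOn_id)
      · simp [hB0]
      · intro y hy
        have hyI : y ∈ Ioo (0:ℝ) 1 := ⟨hy.1, lt_trans hy.2 hx₁1⟩
        exact ((hasDerivAt_pow 2 y).const_mul ((1-ε)^2*d/c^2)).sub (hud y hyI)
      · intro y hy hwy
        have hyb : y ∈ Ioo (0:ℝ) b := ⟨hy.1, lt_trans hy.2 hx₁.2⟩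
        obtain ⟨hyI, hD1, hD2⟩ := hfacts y hyb
        have hDp := hDpos y hyI
        have hu : B y - 1 + y ≤ (1-ε)^2*d/c^2 * y^2 := by linarith
        have hu0 : 0 ≤ B y - 1 + y := by
          obtain ⟨hb1, _⟩ := hBbd y hyI; linarith
        have ht : c^2 * (B y - 1 + y) / (g y * h (B y) * f y (B y)) ≤ 1 - ε := by
          rw [div_le_iff₀ hDp]
          have h1 : c^2 * (B y - 1 + y) ≤ c^2 * ((1-ε)^2*d/c^2 * y^2) :=
            mul_le_mul_of_nonneg_left hu hc2.le
          have h2 : c^2 * ((1-ε)^2*d/c^2 * y^2) = (1-ε)^2 * d * y^2 := by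
            field_simp
          nlinarith [sq_nonneg y]
        simp only [show (2:ℕ)-1 = 1 from rfl, pow_one]
        -- (1-ε)²d/c² * 2y < ε  since y < b ≤ ε/(2γm)
        have hylt : y < ε / (2 * ((1-ε)^2*d/c^2)) := lt_of_lt_of_le hyb.2 hbε
        have h3 : (1-ε)^2*d/c^2 * (2 * y) < ε := by
          rw [lt_div_iff₀ (by positivity : (0:ℝ) < 2 * ((1-ε)^2*d/c^2))] at hylt
          nlinarith
        linarith
    -- conclude the derivative bound
    intro x hx
    obtain ⟨hxI, hD1, hD2⟩ := hfacts x hx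
    refine ⟨hupper x hx, ?_⟩
    have hDp := hDpos x hxI
    have hder := (hODE x hxI).deriv
    rw [hder]
    have heq : c ^ 2 * (1 - x - B x) / (g x * h (B x) * f x (B x))
        = -(c^2 * (B x - 1 + x) / (g x * h (B x) * f x (B x))) := by ring
    rw [heq]
    set t := c^2 * (B x - 1 + x) / (g x * h (B x) * f x (B x)) with htdef
    have hup := hupper x hx
    have hlo := hlower x hx
    have ht1 : t * (1 - ε) ≤ (1+ε)^2 := by
      rw [htdef, div_mul_eq_mul_div, div_le_iff₀ hDp]
      have h1 : c^2 * (B x - 1 + x) * (1-ε) ≤ (1+ε)^2*d*x^2 * (1-ε) := by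
        have := mul_le_mul_of_nonneg_left hup hc2.le
        have h2 : c^2 * ((1+ε)^2*d/c^2 * x^2) = (1+ε)^2 * d * x^2 := by
          field_simp
        nlinarith
      nlinarith [sq_nonneg x]
    have ht2 : (1-ε)^2 ≤ t * (1 + ε) := by
      rw [htdef, div_mul_eq_mul_div, le_div_iff₀ hDp]
      have h1 : (1-ε)^2*d*x^2 * (1+ε) ≤ c^2 * (B x - 1 + x) * (1+ε) := by
        have := mul_le_mul_of_nonneg_left hlo hc2.le
        have h2 : c^2 * ((1-ε)^2*d/c^2 * x^2) = (1-ε)^2 * d * x^2 := by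
          field_simp
        nlinarith
      nlinarith [sq_nonneg x]
    rw [abs_le]
    constructor
    · nlinarith
    · nlinarith
  -- Part 1: the limit of deriv B
  have part1 : Tendsto (deriv B) (𝓝[>] (0:ℝ)) (𝓝 (-1)) := by
    rw [Metric.tendsto_nhds]
    intro δ hδ
    have hεpos : 0 < min (δ/16) (1/4) := lt_min (by positivity) (by norm_num)
    have hε2 : min (δ/16) (1/4) < 1/2 := lt_of_le_of_lt (min_le_right _ _) (by norm_num)
    obtain ⟨b, hb, hb2, hbnd⟩ := key _ hεpos hε2
    filter_upwards [Ioo_mem_nhdsGT hb] with x hx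
    have h1 := (hbnd x hx).2
    rw [Real.dist_eq]
    have h2 : deriv B x - (-1) = deriv B x + 1 := by ring
    rw [h2]
    have h3 : 8 * min (δ/16) (1/4) ≤ 8 * (δ/16) :=
      mul_le_mul_of_nonneg_left (min_le_left _ _) (by norm_num)
    calc |deriv B x + 1| ≤ 8 * min (δ/16) (1/4) := h1
      _ ≤ 8 * (δ/16) := h3
      _ < δ := by linarith
  refine ⟨part1, ?_⟩
  -- Part 2: right derivative at 0
  rw [hasDerivWithinAt_iff_tendsto_slope]
  rw [show (Ici (0:ℝ)) \ {0} = Ioi 0 from Ici_sdiff_left]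
  obtain ⟨b, hb, hb2, hbnd⟩ := key (1/4) (by norm_num) (by norm_num)
  set C : ℝ := (1+(1/4:ℝ))^2*d/c^2 with hCdef
  have hC : Tendsto (fun x => (B x - 1 + x)/x) (𝓝[>] (0:ℝ)) (𝓝 0) := by
    apply tendsto_of_tendsto_of_tendsto_of_le_of_le' tendsto_const_nhds
      (h := fun x => C * x)
    · have : Tendsto (fun x : ℝ => C * x) (𝓝 (0:ℝ)) (𝓝 (C * 0)) :=
        tendsto_const_nhds.mul tendsto_id
      simpa using this.mono_left nhdsWithin_le_nhds
    · filter_upwards [Ioo_mem_nhdsGT hb, hev] with x hx hxI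
      have hu0 : 0 ≤ B x - 1 + x := by
        obtain ⟨hb1, _⟩ := hBbd x hxI; linarith
      exact div_nonneg hu0 hx.1.le
    · filter_upwards [Ioo_mem_nhdsGT hb, hev] with x hx hxI
      rw [div_le_iff₀ hx.1]
      have := (hbnd x hx).1
      calc B x - 1 + x ≤ (1+(1/4:ℝ))^2*d/c^2 * x^2 := this
        _ = C * x * x := by rw [hCdef]; ring
  have h2 : Tendsto (fun x => (B x - 1 + x)/x - 1) (𝓝[>] (0:ℝ)) (𝓝 (-1)) := by
    have := hC.sub (tendsto_const_nhds (x := (1:ℝ)))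
    simpa using this
  apply h2.congr'
  filter_upwards [self_mem_nhdsWithin] with x hx
  have hx0 : x ≠ 0 := ne_of_gt hx
  rw [slope_def_field, hB0]
  field_simp
  ring
end
end

section
/- Let 0 < c₁ < c₂ and, for i = 1,2, let B_i : [0,1) → ℝ be continuous with B_i(0) = 1, differentiable on (0,1) with Ḃ_i(η) ≤ 0 and 1 − η ≤ B_i(η) ≤ 1 for all η ∈ (0,1), and satisfying Ḃ_i(η) = c_i²·(1 − η − B_i(η))/(g(η)·h(B_i(η))·f(η,B_i(η))) for all η ∈ (0,1). Then B₁(η) > B₂(η) for every η ∈ (0,1). -/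
open MeasureTheory Filter Set Topology

noncomputable section

/-- If `v` has positive derivative at `x`, then `v y < v x` for `y` slightly to the left. -/
lemma aux_ev_lt_of_deriv_pos {v : ℝ → ℝ} {x d : ℝ} (hv : HasDerivAt v d x) (hd : 0 < d) :
    ∀ᶠ y in 𝓝[<] x, v y < v x := by
  have h := hasDerivAt_iff_tendsto_slope.mp hv
  have h2 : ∀ᶠ y in 𝓝[≠] x, 0 < slope v x y := h.eventually (eventually_gt_nhds hd)
  have h3 : (𝓝[<] x) ≤ (𝓝[≠] x) := nhdsWithin_mono x (fun y hy => ne_of_lt hy)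
  filter_upwards [h3 h2, self_mem_nhdsWithin] with y hy hyx
  rw [slope_def_field] at hy
  rcases div_pos_iff.1 hy with ⟨_, hpos⟩ | ⟨hneg, _⟩
  · exact absurd hpos (by simp only [mem_Iio] at hyx; linarith)
  · linarith

set_option maxHeartbeats 4000000 in
/-- Lemma 4.4 (monotonicity in the speed): if `0 < c₁ < c₂` and `B₁`, `B₂` solve the singular
first-order problem with speeds `c₁`, `c₂`, then `B₁ > B₂` on `(0,1)`. -/
theorem statement15
    (f : ℝ → ℝ → ℝ) (g h : ℝ → ℝ) (L1 L2 Mg : ℝ)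
    (A : Assumptions f g h L1 L2 Mg)
    (c₁ c₂ : ℝ) (hc₁ : 0 < c₁) (hc₁₂ : c₁ < c₂)
    (B₁ B₂ : ℝ → ℝ)
    (hB₁cont : ContinuousOn B₁ (Ico 0 1)) (hB₁0 : B₁ 0 = 1)
    (hODE₁ : ∀ x ∈ Ioo (0:ℝ) 1,
      HasDerivAt B₁ (c₁ ^ 2 * (1 - x - B₁ x) / (g x * h (B₁ x) * f x (B₁ x))) x)
    (hB₁der : ∀ x ∈ Ioo (0:ℝ) 1, deriv B₁ x ≤ 0)
    (hB₁bd : ∀ x ∈ Ioo (0:ℝ) 1, 1 - x ≤ B₁ x ∧ B₁ x ≤ 1)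
    (hB₂cont : ContinuousOn B₂ (Ico 0 1)) (hB₂0 : B₂ 0 = 1)
    (hODE₂ : ∀ x ∈ Ioo (0:ℝ) 1,
      HasDerivAt B₂ (c₂ ^ 2 * (1 - x - B₂ x) / (g x * h (B₂ x) * f x (B₂ x))) x)
    (hB₂der : ∀ x ∈ Ioo (0:ℝ) 1, deriv B₂ x ≤ 0)
    (hB₂bd : ∀ x ∈ Ioo (0:ℝ) 1, 1 - x ≤ B₂ x ∧ B₂ x ≤ 1) :
    ∀ x ∈ Ioo (0:ℝ) 1, B₂ x < B₁ x := by
  -- basic positivity facts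
  have hc₂ : 0 < c₂ := hc₁.trans hc₁₂
  have hL1 := A.L1_pos
  -- values of B in (0,1]
  have hBmem : ∀ (B : ℝ → ℝ), (∀ x ∈ Ioo (0:ℝ) 1, 1 - x ≤ B x ∧ B x ≤ 1) →
      ∀ x ∈ Ioo (0:ℝ) 1, B x ∈ Icc (0:ℝ) 1 ∧ 0 < B x ∧ 1 - x ≤ B x := by
    intro B hbd x hx
    obtain ⟨h1, h2⟩ := hbd x hx
    exact ⟨⟨by linarith [hx.2], h2⟩, by linarith [hx.2], h1⟩
  have hgpos : ∀ x ∈ Ioo (0:ℝ) 1, 0 < g x := by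
    intro x hx
    have hxm : x ∈ Icc (0:ℝ) 1 := ⟨hx.1.le, hx.2.le⟩
    rcases (A.g_nonneg x hxm).lt_or_eq with h | h
    · exact h
    · exact absurd ((A.g_zero_iff x hxm).1 h.symm) (ne_of_gt hx.1)
  have hhpos : ∀ r ∈ Icc (0:ℝ) 1, r ≠ 0 → 0 < h r := by
    intro r hr hr0
    rcases (A.h_nonneg r hr).lt_or_eq with h | h
    · exact h
    · exact absurd ((A.h_zero_iff r hr).1 h.symm) hr0
  have hfpos : ∀ x ∈ Ioo (0:ℝ) 1, ∀ r ∈ Icc (0:ℝ) 1, r ≠ 0 → 0 < f x r := by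
    intro x hx r hr hr0
    have hxm : x ∈ Icc (0:ℝ) 1 := ⟨hx.1.le, hx.2.le⟩
    rcases (A.f_nonneg x hxm r hr).lt_or_eq with h | h
    · exact h
    · rcases (A.f_zero_iff x hxm r hr).1 h.symm with h' | h'
      · exact absurd h' (ne_of_gt hx.1)
      · exact absurd h' hr0
  have hDpos : ∀ (B : ℝ → ℝ), (∀ x ∈ Ioo (0:ℝ) 1, 1 - x ≤ B x ∧ B x ≤ 1) →
      ∀ x ∈ Ioo (0:ℝ) 1, 0 < g x * h (B x) * f x (B x) := by
    intro B hbd x hx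
    obtain ⟨hm, hp, _⟩ := hBmem B hbd x hx
    exact mul_pos (mul_pos (hgpos x hx) (hhpos _ hm (ne_of_gt hp))) (hfpos x hx _ hm (ne_of_gt hp))
  -- the barrier `B x > 1 - x` on (0,1)
  have hBgt : ∀ (c : ℝ) (B : ℝ → ℝ),
      (∀ x ∈ Ioo (0:ℝ) 1, HasDerivAt B (c ^ 2 * (1 - x - B x) / (g x * h (B x) * f x (B x))) x) →
      (∀ x ∈ Ioo (0:ℝ) 1, 1 - x ≤ B x ∧ B x ≤ 1) →
      ∀ x ∈ Ioo (0:ℝ) 1, 1 - x < B x := by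
    intro c B hode hbd x hx
    rcases (hbd x hx).1.lt_or_eq with h | heq
    · exact h
    exfalso
    have hder : HasDerivAt (fun y => B y - (1 - y))
        (c ^ 2 * (1 - x - B x) / (g x * h (B x) * f x (B x)) - (-1)) x :=
      (hode x hx).sub ((hasDerivAt_id x).const_sub 1)
    have hzero : c ^ 2 * (1 - x - B x) / (g x * h (B x) * f x (B x)) = 0 := by
      rw [← heq]; simp
    have hmin : IsLocalMin (fun y => B y - (1 - y)) x := by
      filter_upwards [Ioo_mem_nhds hx.1 hx.2] with y hy
      have := (hbd y hy).1
      simp only [← heq]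
      linarith
    have := hmin.hasDerivAt_eq_zero hder
    rw [hzero] at this
    linarith
  have hBgt₁ : ∀ x ∈ Ioo (0:ℝ) 1, 1 - x < B₁ x := hBgt c₁ B₁ hODE₁ hB₁bd
  -- f(x,1) bounds
  have hFcont : ContinuousOn (fun p : ℝ × ℝ => f p.1 p.2) (Icc 0 1 ×ˢ Icc 0 1) :=
    A.f_C1.continuousOn
  have hfx1 : ∀ x ∈ Ioo (0:ℝ) 1, L1 * x ≤ f x 1 := by
    intro x hx
    have hne : ((𝓝[Ioo (0:ℝ) 1] 1)).NeBot := by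
      rw [← mem_closure_iff_nhdsWithin_neBot, closure_Ioo (by norm_num : (0:ℝ) ≠ 1)]
      exact ⟨by norm_num, le_refl 1⟩
    have hc1 : ContinuousWithinAt (fun r => f x r) (Icc 0 1) 1 := by
      have : ContinuousWithinAt (fun p : ℝ × ℝ => f p.1 p.2) (Icc 0 1 ×ˢ Icc 0 1) (x, 1) :=
        hFcont (x, 1) ⟨⟨hx.1.le, hx.2.le⟩, ⟨zero_le_one, le_refl 1⟩⟩
      have hmap : ContinuousWithinAt (fun r : ℝ => ((x, r) : ℝ × ℝ)) (Icc 0 1) 1 :=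
        (continuous_const.prodMk continuous_id).continuousWithinAt
      exact this.comp hmap (fun r hr => ⟨⟨hx.1.le, hx.2.le⟩, hr⟩)
    have ht1 : Filter.Tendsto (fun r => f x r) (𝓝[Ioo (0:ℝ) 1] 1) (𝓝 (f x 1)) :=
      hc1.mono Ioo_subset_Icc_self
    have ht2 : Filter.Tendsto (fun r => L1 * (x * r)) (𝓝[Ioo (0:ℝ) 1] 1) (𝓝 (L1 * x)) := by
      have : Filter.Tendsto (fun r : ℝ => L1 * (x * r)) (𝓝 1) (𝓝 (L1 * (x * 1))) := by
        exact (continuous_const.mul (continuous_const.mul continuous_id)).tendsto 1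
      rw [mul_one] at this
      exact this.mono_left nhdsWithin_le_nhds
    refine le_of_tendsto_of_tendsto ht2 ht1 ?_
    filter_upwards [self_mem_nhdsWithin] with r hr
    exact A.f_lower x hx r hr
  -- h(1) > 0
  have h1mem : (1:ℝ) ∈ Icc (0:ℝ) 1 := ⟨zero_le_one, le_refl 1⟩
  have hh1 : 0 < h 1 := hhpos 1 h1mem one_ne_zero
  -- the constant s
  obtain ⟨s, hs0, hs1, hcs⟩ : ∃ s : ℝ, 0 < s ∧ s < 1 ∧ c₁ * (1 + s) = c₂ * (1 - s) := by
    refine ⟨(c₂ - c₁) / (c₁ + c₂), div_pos (by linarith) (by linarith), ?_, ?_⟩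
    · rw [div_lt_one (by linarith : (0:ℝ) < c₁ + c₂)]; linarith
    · field_simp
      ring
  -- the derivative of f at (0,1) within the square
  have hmem01 : ((0:ℝ), (1:ℝ)) ∈ (Icc (0:ℝ) 1 ×ˢ Icc (0:ℝ) 1) := ⟨⟨le_refl 0, zero_le_one⟩, h1mem⟩
  have hdw : DifferentiableWithinAt ℝ (fun p : ℝ × ℝ => f p.1 p.2)
      (Icc 0 1 ×ˢ Icc 0 1) ((0:ℝ), (1:ℝ)) :=
    (A.f_C1.differentiableOn one_ne_zero) _ hmem01
  set L : ℝ × ℝ →L[ℝ] ℝ :=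
    fderivWithin ℝ (fun p : ℝ × ℝ => f p.1 p.2) (Icc 0 1 ×ˢ Icc 0 1) ((0:ℝ), (1:ℝ)) with hL_def
  have hfd : HasFDerivWithinAt (fun p : ℝ × ℝ => f p.1 p.2) L
      (Icc 0 1 ×ˢ Icc 0 1) ((0:ℝ), (1:ℝ)) := hdw.hasFDerivWithinAt
  have hlo := hfd.isLittleO
  have hf0 : ∀ r ∈ Icc (0:ℝ) 1, f 0 r = 0 := by
    intro r hr
    exact (A.f_zero_iff 0 ⟨le_refl 0, zero_le_one⟩ r hr).2 (Or.inl rfl)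
  -- L(0,1) = 0
  have hL01 : L ((0:ℝ), (1:ℝ)) = 0 := by
    have key : ∀ ε > (0:ℝ), |L ((0:ℝ), (1:ℝ))| ≤ ε := by
      intro ε hε
      obtain ⟨ρ, hρ, hsub⟩ := Metric.mem_nhdsWithin_iff.1 (hlo.def hε)
      set t : ℝ := min (ρ / 2) (1 / 2) with ht_def
      have ht0 : 0 < t := lt_min (by linarith) (by norm_num)
      have htρ : t < ρ := lt_of_le_of_lt (min_le_left _ _) (by linarith)
      have ht1 : t ≤ 1 / 2 := min_le_right _ _
      have hpmem : ((0:ℝ), 1 - t) ∈ Metric.ball ((0:ℝ), (1:ℝ)) ρ ∩ (Icc 0 1 ×ˢ Icc 0 1) := by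
        constructor
        · rw [Metric.mem_ball, Prod.dist_eq]
          simp only [Real.dist_eq]
          rw [show |(0:ℝ) - 0| = 0 by simp,
            show |1 - t - 1| = t by rw [show (1:ℝ) - t - 1 = -t by ring, abs_neg, abs_of_pos ht0]]
          exact max_lt hρ htρ
        · exact ⟨⟨le_refl 0, zero_le_one⟩, show (1:ℝ) - t ∈ Icc (0:ℝ) 1 from ⟨by linarith, by linarith⟩⟩
      have hb := hsub hpmem
      simp only [Set.mem_setOf_eq] at hb
      have he1 : f (((0:ℝ), 1 - t) : ℝ × ℝ).1 (((0:ℝ), 1 - t) : ℝ × ℝ).2 = 0 :=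
        hf0 (1 - t) ⟨by linarith, by linarith⟩
      have he2 : f (((0:ℝ), (1:ℝ)) : ℝ × ℝ).1 (((0:ℝ), (1:ℝ)) : ℝ × ℝ).2 = 0 := hf0 1 h1mem
      have he3 : (((0:ℝ), 1 - t) : ℝ × ℝ) - ((0:ℝ), (1:ℝ)) = (-t) • (((0:ℝ), (1:ℝ)) : ℝ × ℝ) := by
        simp [Prod.ext_iff]
      rw [he1, he2, he3, L.map_smul] at hb
      have he4 : (0:ℝ) - 0 - (-t) • L ((0:ℝ), (1:ℝ)) = t * L ((0:ℝ), (1:ℝ)) := by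
        rw [smul_eq_mul]; ring
      have he5 : ‖(-t) • (((0:ℝ), (1:ℝ)) : ℝ × ℝ)‖ = t := by
        rw [norm_smul, Prod.norm_def]
        simp [Real.norm_eq_abs, abs_of_pos ht0]
      rw [he4, he5, Real.norm_eq_abs, abs_mul, abs_of_pos ht0] at hb
      calc |L ((0:ℝ), (1:ℝ))| = t * |L ((0:ℝ), (1:ℝ))| / t := by field_simp
        _ ≤ ε * t / t := by gcongr
        _ = ε := by field_simp
    have h0 : |L ((0:ℝ), (1:ℝ))| ≤ 0 := by
      by_contra hcon
      push_neg at hcon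
      have := key (|L ((0:ℝ), (1:ℝ))| / 2) (by linarith)
      linarith
    exact abs_eq_zero.1 (le_antisymm h0 (abs_nonneg _))
  have hL0r : ∀ u : ℝ, L ((0:ℝ), u) = 0 := by
    intro u
    have : (((0:ℝ), u) : ℝ × ℝ) = u • (((0:ℝ), (1:ℝ)) : ℝ × ℝ) := by simp [Prod.ext_iff]
    rw [this, L.map_smul, hL01, smul_zero]
  -- main estimate on f near (0,1)
  have fest : ∀ ε > (0:ℝ), ∃ ab > (0:ℝ), ∀ x ∈ Ioo (0:ℝ) 1, x ≤ ab →
      ∀ r ∈ Icc (1 - x) 1, |f x r - f x 1| ≤ ε * x := by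
    intro ε hε
    obtain ⟨ρ, hρ, hsub⟩ := Metric.mem_nhdsWithin_iff.1 (hlo.def (half_pos hε))
    refine ⟨ρ / 2, half_pos hρ, ?_⟩
    intro x hx hxρ r hr
    have hr0 : (0:ℝ) ≤ r := by nlinarith [hr.1, hx.2]
    have hrx : 1 - r ≤ x := by linarith [hr.1]
    have hpS : ((x, r) : ℝ × ℝ) ∈ Icc (0:ℝ) 1 ×ˢ Icc (0:ℝ) 1 :=
      ⟨⟨hx.1.le, hx.2.le⟩, ⟨hr0, hr.2⟩⟩
    have hqS : ((x, (1:ℝ)) : ℝ × ℝ) ∈ Icc (0:ℝ) 1 ×ˢ Icc (0:ℝ) 1 := ⟨⟨hx.1.le, hx.2.le⟩, h1mem⟩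
    have hnp : ‖((x, r) : ℝ × ℝ) - ((0:ℝ), (1:ℝ))‖ = x := by
      rw [← dist_eq_norm, Prod.dist_eq]
      simp only [Real.dist_eq]
      rw [show |x - 0| = x by rw [sub_zero]; exact abs_of_pos hx.1,
        show |r - 1| = 1 - r by rw [abs_of_nonpos (by linarith [hr.2])]; ring]
      exact max_eq_left hrx
    have hnq : ‖((x, (1:ℝ)) : ℝ × ℝ) - ((0:ℝ), (1:ℝ))‖ = x := by
      rw [← dist_eq_norm, Prod.dist_eq]
      simp only [Real.dist_eq]
      rw [show |x - 0| = x by rw [sub_zero]; exact abs_of_pos hx.1,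
        show |(1:ℝ) - 1| = 0 by simp]
      exact max_eq_left hx.1.le
    have hbp := hsub ⟨by rw [Metric.mem_ball, dist_eq_norm, hnp]; linarith, hpS⟩
    have hbq := hsub ⟨by rw [Metric.mem_ball, dist_eq_norm, hnq]; linarith, hqS⟩
    simp only [Set.mem_setOf_eq] at hbp hbq
    rw [hnp, Real.norm_eq_abs] at hbp
    rw [hnq, Real.norm_eq_abs] at hbq
    have hLpq : L (((x, r) : ℝ × ℝ) - ((0:ℝ), (1:ℝ)))
        - L (((x, (1:ℝ)) : ℝ × ℝ) - ((0:ℝ), (1:ℝ))) = 0 := by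
      rw [← L.map_sub]
      rw [show ((x, r) : ℝ × ℝ) - ((0:ℝ), (1:ℝ)) - (((x, (1:ℝ)) : ℝ × ℝ) - ((0:ℝ), (1:ℝ)))
          = (((0:ℝ), r - 1) : ℝ × ℝ) by simp [Prod.ext_iff]]
      exact hL0r (r - 1)
    have heq : f x r - f x 1
        = (f ((x, r) : ℝ × ℝ).1 ((x, r) : ℝ × ℝ).2
            - f (((0:ℝ), (1:ℝ)) : ℝ × ℝ).1 (((0:ℝ), (1:ℝ)) : ℝ × ℝ).2
            - L (((x, r) : ℝ × ℝ) - ((0:ℝ), (1:ℝ))))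
          - (f ((x, (1:ℝ)) : ℝ × ℝ).1 ((x, (1:ℝ)) : ℝ × ℝ).2
            - f (((0:ℝ), (1:ℝ)) : ℝ × ℝ).1 (((0:ℝ), (1:ℝ)) : ℝ × ℝ).2
            - L (((x, (1:ℝ)) : ℝ × ℝ) - ((0:ℝ), (1:ℝ)))) := by
      simp only []
      linear_combination hLpq
    rw [heq]
    have htri : ∀ a b : ℝ, |a - b| ≤ |a| + |b| := by
      intro a b
      calc |a - b| = |a + (-b)| := by ring_nf
        _ ≤ |a| + |(-b)| := abs_add_le _ _
        _ = |a| + |b| := by rw [abs_neg]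
    calc _ ≤ _ := htri _ _
      _ ≤ ε / 2 * x + ε / 2 * x := add_le_add hbp hbq
      _ = ε * x := by ring
  -- continuity estimate for h near 1
  have hhest : ∃ ah > (0:ℝ), ∀ r ∈ Icc (0:ℝ) 1, |r - 1| ≤ ah → |h r - h 1| ≤ s * h 1 := by
    have hcw : ContinuousWithinAt h (Icc 0 1) 1 := (A.h_C1.continuousOn) 1 h1mem
    obtain ⟨δ₀, hδ₀, hprop⟩ := Metric.continuousWithinAt_iff.1 hcw (s * h 1) (mul_pos hs0 hh1)
    refine ⟨δ₀ / 2, half_pos hδ₀, ?_⟩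
    intro r hrm hrd
    have := hprop hrm (by rw [Real.dist_eq]; linarith)
    rw [Real.dist_eq] at this
    linarith
  obtain ⟨ah, hah, hhp⟩ := hhest
  obtain ⟨ab, hab, hfp⟩ := fest (s * L1) (mul_pos hs0 hL1)
  -- the threshold a
  obtain ⟨a, ha0, ha_ab, ha_ah, ha_half⟩ :
      ∃ a : ℝ, 0 < a ∧ a ≤ ab ∧ a ≤ ah ∧ a ≤ 1 / 2 :=
    ⟨min (min ab ah) (1 / 2), lt_min (lt_min hab hah) (by norm_num),
      (min_le_left _ _).trans (min_le_left _ _),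
      (min_le_left _ _).trans (min_le_right _ _), min_le_right _ _⟩
  have ha1 : a < 1 := lt_of_le_of_lt ha_half (by norm_num)
  have hsubI : ∀ x, x ∈ Ioc (0:ℝ) a → x ∈ Ioo (0:ℝ) 1 := by
    intro x hx; exact ⟨hx.1, lt_of_le_of_lt hx.2 ha1⟩
  -- the key comparison of the two right-hand sides
  have key4 : ∀ x ∈ Ioc (0:ℝ) a, ∀ r₁ ∈ Icc (1 - x) 1, ∀ r₂ ∈ Icc (1 - x) 1,
      c₁ ^ 2 * (h r₂ * f x r₂) ≤ c₂ ^ 2 * (h r₁ * f x r₁) := by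
    intro x hx r₁ hr₁ r₂ hr₂
    have hxI : x ∈ Ioo (0:ℝ) 1 := hsubI x hx
    have hfx1l : L1 * x ≤ f x 1 := hfx1 x hxI
    have hfx1pos : 0 < f x 1 := lt_of_lt_of_le (mul_pos hL1 hxI.1) hfx1l
    have hmem : ∀ r ∈ Icc (1 - x) 1, r ∈ Icc (0:ℝ) 1 := by
      intro r hr; exact ⟨by nlinarith [hr.1, hxI.2], hr.2⟩
    have hhb : ∀ r ∈ Icc (1 - x) 1, |h r - h 1| ≤ s * h 1 := by
      intro r hr
      refine hhp r (hmem r hr) ?_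
      rw [abs_of_nonpos (by linarith [hr.2])]
      have := hr.1
      have := hx.2
      linarith [ha_ah]
    have hfb : ∀ r ∈ Icc (1 - x) 1, |f x r - f x 1| ≤ s * (f x 1) := by
      intro r hr
      have := hfp x hxI (hx.2.trans ha_ab) r hr
      have h2 : s * L1 * x ≤ s * f x 1 := by
        rw [mul_assoc]
        exact mul_le_mul_of_nonneg_left hfx1l hs0.le
      linarith
    have h2u : h r₂ ≤ (1 + s) * h 1 := by have := abs_le.1 (hhb r₂ hr₂); linarith [this.2]
    have h1l : (1 - s) * h 1 ≤ h r₁ := by have := abs_le.1 (hhb r₁ hr₁); linarith [this.1]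
    have f2u : f x r₂ ≤ (1 + s) * f x 1 := by have := abs_le.1 (hfb r₂ hr₂); linarith [this.2]
    have f1l : (1 - s) * f x 1 ≤ f x r₁ := by have := abs_le.1 (hfb r₁ hr₁); linarith [this.1]
    have hf2n : 0 ≤ f x r₂ := A.f_nonneg x ⟨hxI.1.le, hxI.2.le⟩ r₂ (hmem r₂ hr₂)
    have hh1n : 0 ≤ h r₁ := A.h_nonneg r₁ (hmem r₁ hr₁)
    calc c₁ ^ 2 * (h r₂ * f x r₂)
        ≤ c₁ ^ 2 * (((1 + s) * h 1) * ((1 + s) * f x 1)) := by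
          refine mul_le_mul_of_nonneg_left ?_ (sq_nonneg c₁)
          exact mul_le_mul h2u f2u hf2n (mul_nonneg (by linarith) hh1.le)
      _ = (c₁ * (1 + s)) ^ 2 * (h 1 * f x 1) := by ring
      _ = (c₂ * (1 - s)) ^ 2 * (h 1 * f x 1) := by rw [hcs]
      _ = c₂ ^ 2 * (((1 - s) * h 1) * ((1 - s) * f x 1)) := by ring
      _ ≤ c₂ ^ 2 * (h r₁ * f x r₁) := by
          refine mul_le_mul_of_nonneg_left ?_ (sq_nonneg c₂)
          exact mul_le_mul h1l f1l (mul_nonneg (by linarith) hfx1pos.le) hh1n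
  -- derivative of the difference
  have hdiffv : ∀ y ∈ Ioo (0:ℝ) 1, HasDerivAt (fun x => B₁ x - B₂ x)
      (c₁ ^ 2 * (1 - y - B₁ y) / (g y * h (B₁ y) * f y (B₁ y))
        - c₂ ^ 2 * (1 - y - B₂ y) / (g y * h (B₂ y) * f y (B₂ y))) y :=
    fun y hy => (hODE₁ y hy).sub (hODE₂ y hy)
  -- where B₁ ≤ B₂ and y ≤ a, the derivative of the difference is nonnegative
  have dvnonneg : ∀ y ∈ Ioc (0:ℝ) a, B₁ y ≤ B₂ y →
      0 ≤ c₁ ^ 2 * (1 - y - B₁ y) / (g y * h (B₁ y) * f y (B₁ y))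
        - c₂ ^ 2 * (1 - y - B₂ y) / (g y * h (B₂ y) * f y (B₂ y)) := by
    intro y hy hle
    have hyI : y ∈ Ioo (0:ℝ) 1 := hsubI y hy
    have hD₁ : 0 < g y * h (B₁ y) * f y (B₁ y) := hDpos B₁ hB₁bd y hyI
    have hD₂ : 0 < g y * h (B₂ y) * f y (B₂ y) := hDpos B₂ hB₂bd y hyI
    have hr₁m : B₁ y ∈ Icc (1 - y) 1 := ⟨(hB₁bd y hyI).1, (hB₁bd y hyI).2⟩
    have hr₂m : B₂ y ∈ Icc (1 - y) 1 := ⟨(hB₂bd y hyI).1, (hB₂bd y hyI).2⟩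
    have k := key4 y hy (B₁ y) hr₁m (B₂ y) hr₂m
    have kg : c₁ ^ 2 * (g y * h (B₂ y) * f y (B₂ y)) ≤ c₂ ^ 2 * (g y * h (B₁ y) * f y (B₁ y)) := by
      have := mul_le_mul_of_nonneg_left k (hgpos y hyI).le
      nlinarith [this]
    rw [sub_nonneg, div_le_div_iff₀ hD₂ hD₁]
    have ht₂ : 1 - y - B₂ y ≤ 0 := by linarith [hr₂m.1]
    have ht₁₂ : 1 - y - B₂ y ≤ 1 - y - B₁ y := by linarith
    nlinarith [mul_nonneg (neg_nonneg.2 ht₂)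
        (sub_nonneg.2 kg),
      mul_nonneg (sub_nonneg.2 ht₁₂) (mul_nonneg (sq_nonneg c₁) hD₂.le)]
  -- continuity of the difference
  have hvcont : ContinuousOn (fun x => B₁ x - B₂ x) (Ico 0 1) := hB₁cont.sub hB₂cont
  have hv0 : B₁ 0 - B₂ 0 = 0 := by rw [hB₁0, hB₂0]; ring
  -- Step A : B₁ ≥ B₂ on (0, a]
  have stepA : ∀ x₀ ∈ Ioc (0:ℝ) a, 0 ≤ B₁ x₀ - B₂ x₀ := by
    intro x₀ hx₀
    by_contra hneg
    push_neg at hneg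
    have hx₀1 : x₀ < 1 := lt_of_le_of_lt hx₀.2 ha1
    set T : Set ℝ := Icc 0 x₀ ∩ (fun x => B₁ x - B₂ x) ⁻¹' Ici 0 with hT_def
    have hTclosed : IsClosed T :=
      (hvcont.mono (fun y hy => ⟨hy.1, lt_of_le_of_lt hy.2 hx₀1⟩)).preimage_isClosed_of_isClosed
        isClosed_Icc isClosed_Ici
    have hT0 : (0:ℝ) ∈ T := ⟨⟨le_refl 0, hx₀.1.le⟩, by simp [hv0]⟩
    have hTbdd : BddAbove T := ⟨x₀, fun y hy => hy.1.2⟩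
    set z : ℝ := sSup T with hz_def
    have hzT : z ∈ T := hTclosed.csSup_mem ⟨0, hT0⟩ hTbdd
    have hz0 : 0 ≤ z := hzT.1.1
    have hzx₀ : z < x₀ := by
      rcases hzT.1.2.lt_or_eq with h | h
      · exact h
      · exfalso; have := hzT.2; rw [h] at this; simp only [Set.mem_preimage, Set.mem_Ici] at this; linarith
    have hnegT : ∀ y, z < y → y ≤ x₀ → B₁ y - B₂ y < 0 := by
      intro y hy1 hy2
      by_contra hc
      push_neg at hc
      have : y ∈ T := ⟨⟨by linarith, hy2⟩, by simpa using hc⟩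
      exact absurd (le_csSup hTbdd this) (by linarith)
    have hmono : MonotoneOn (fun x => B₁ x - B₂ x) (Icc z x₀) := by
      refine monotoneOn_of_deriv_nonneg (convex_Icc z x₀)
        (hvcont.mono (fun y hy => ⟨by linarith [hy.1], by linarith [hy.2]⟩)) ?_ ?_
      · intro y hy
        rw [interior_Icc] at hy
        have hyI : y ∈ Ioo (0:ℝ) 1 := ⟨by linarith [hy.1], by linarith [hy.2, hx₀1]⟩
        exact (hdiffv y hyI).differentiableAt.differentiableWithinAt
      · intro y hy
        rw [interior_Icc] at hy
        have hyI : y ∈ Ioo (0:ℝ) 1 := ⟨by linarith [hy.1], by linarith [hy.2, hx₀1]⟩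
        rw [(hdiffv y hyI).deriv]
        refine dvnonneg y ⟨hyI.1, by linarith [hy.2, hx₀.2]⟩ ?_
        have := hnegT y hy.1 hy.2.le
        linarith
    have := hmono ⟨le_refl z, hzx₀.le⟩ ⟨hzx₀.le, le_refl x₀⟩ hzx₀.le
    have hzpos := hzT.2
    simp only [Set.mem_preimage, Set.mem_Ici] at hzpos
    replace this : B₁ z - B₂ z ≤ B₁ x₀ - B₂ x₀ := this
    linarith
  -- derivative at points of equality is positive
  have eqpt : ∀ x ∈ Ioo (0:ℝ) 1, B₁ x = B₂ x →
      ∃ d, HasDerivAt (fun y => B₁ y - B₂ y) d x ∧ 0 < d := by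
    intro x hx heq
    refine ⟨c₁ ^ 2 * (1 - x - B₁ x) / (g x * h (B₁ x) * f x (B₁ x))
      - c₂ ^ 2 * (1 - x - B₂ x) / (g x * h (B₂ x) * f x (B₂ x)), hdiffv x hx, ?_⟩
    rw [← heq]
    have hD₁ : 0 < g x * h (B₁ x) * f x (B₁ x) := hDpos B₁ hB₁bd x hx
    have hgt := hBgt₁ x hx
    have : c₁ ^ 2 * (1 - x - B₁ x) / (g x * h (B₁ x) * f x (B₁ x))
        - c₂ ^ 2 * (1 - x - B₁ x) / (g x * h (B₁ x) * f x (B₁ x))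
        = (c₁ ^ 2 - c₂ ^ 2) * (1 - x - B₁ x) / (g x * h (B₁ x) * f x (B₁ x)) := by ring
    rw [this]
    apply div_pos _ hD₁
    have h1 : c₁ ^ 2 - c₂ ^ 2 < 0 := by nlinarith
    have h2 : 1 - x - B₁ x < 0 := by linarith
    exact mul_pos_of_neg_of_neg h1 h2
  -- Step B : B₁ > B₂ on (0, a]
  have stepB : ∀ x ∈ Ioc (0:ℝ) a, 0 < B₁ x - B₂ x := by
    intro x hx
    rcases (stepA x hx).lt_or_eq with h | h
    · exact h
    exfalso
    have hxI : x ∈ Ioo (0:ℝ) 1 := hsubI x hx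
    obtain ⟨d, hd, hdpos⟩ := eqpt x hxI (by linarith)
    have hev := aux_ev_lt_of_deriv_pos hd hdpos
    obtain ⟨y, hy1, hy2⟩ := (hev.and (Ioo_mem_nhdsLT_of_mem (⟨hxI.1, le_refl x⟩ : x ∈ Ioc 0 x))).exists
    have := stepA y ⟨hy2.1, by linarith [hy2.2, hx.2]⟩
    replace hy1 : B₁ y - B₂ y < B₁ x - B₂ x := hy1
    linarith
  -- Step C : B₁ > B₂ on [a, 1)
  have stepC : ∀ x ∈ Ico a 1, 0 < B₁ x - B₂ x := by
    intro xb hxb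
    by_contra hle
    push_neg at hle
    have haxb : a < xb := by
      rcases hxb.1.lt_or_eq with h | h
      · exact h
      · exfalso; have := stepB a ⟨ha0, le_refl a⟩; rw [h] at this; linarith
    -- find a strict point
    obtain ⟨x', hax', hx'1, hvx'⟩ : ∃ x', a < x' ∧ x' < 1 ∧ B₁ x' - B₂ x' < 0 := by
      rcases hle.lt_or_eq with h | h
      · exact ⟨xb, haxb, hxb.2, h⟩
      · obtain ⟨d, hd, hdpos⟩ := eqpt xb ⟨lt_trans ha0 haxb, hxb.2⟩ (by linarith)
        have hev := aux_ev_lt_of_deriv_pos hd hdpos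
        obtain ⟨y, hy1, hy2⟩ :=
          (hev.and (Ioo_mem_nhdsLT_of_mem (⟨haxb, le_refl xb⟩ : xb ∈ Ioc a xb))).exists
        refine ⟨y, hy2.1, lt_trans hy2.2 hxb.2, ?_⟩
        replace hy1 : B₁ y - B₂ y < B₁ xb - B₂ xb := hy1
        linarith
    set T : Set ℝ := Icc a x' ∩ (fun x => B₁ x - B₂ x) ⁻¹' Iic 0 with hT_def
    have hTclosed : IsClosed T :=
      (hvcont.mono (fun y hy => ⟨le_trans ha0.le hy.1, lt_of_le_of_lt hy.2 hx'1⟩)).preimage_isClosed_of_isClosed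
        isClosed_Icc isClosed_Iic
    have hTx' : x' ∈ T := ⟨⟨hax'.le, le_refl x'⟩, by simp only [Set.mem_preimage, Set.mem_Iic]; linarith⟩
    have hTbdd : BddBelow T := ⟨a, fun y hy => hy.1.1⟩
    set z : ℝ := sInf T with hz_def
    have hzT : z ∈ T := hTclosed.csInf_mem ⟨x', hTx'⟩ hTbdd
    have hza : a ≤ z := hzT.1.1
    have hz1 : z < 1 := lt_of_le_of_lt hzT.1.2 hx'1
    have hzI : z ∈ Ioo (0:ℝ) 1 := ⟨lt_of_lt_of_le ha0 hza, hz1⟩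
    have hza' : a < z := by
      rcases hza.lt_or_eq with h | h
      · exact h
      · exfalso
        have := stepB a ⟨ha0, le_refl a⟩
        have h2 := hzT.2
        simp only [Set.mem_preimage, Set.mem_Iic] at h2
        rw [← h] at h2
        linarith
    have hposl : ∀ y, a ≤ y → y < z → 0 < B₁ y - B₂ y := by
      intro y hy1 hy2
      by_contra hc
      push_neg at hc
      have : y ∈ T := ⟨⟨hy1, by linarith [hzT.1.2]⟩, by simpa using hc⟩
      exact absurd (csInf_le hTbdd this) (by linarith)
    -- v z = 0 by continuity from the left
    have hvz : B₁ z - B₂ z = 0 := by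
      have h2 := hzT.2
      simp only [Set.mem_preimage, Set.mem_Iic] at h2
      refine le_antisymm h2 ?_
      have hcz : ContinuousWithinAt (fun x => B₁ x - B₂ x) (Ico a z) z :=
        (hvcont z ⟨by linarith [hzI.1], hz1⟩).mono
          (fun y hy => ⟨by linarith [hy.1, ha0], by linarith [hy.2]⟩)
      haveI : (𝓝[Ico a z] z).NeBot := by
        rw [← mem_closure_iff_nhdsWithin_neBot, closure_Ico (ne_of_lt hza')]
        exact ⟨hza'.le, le_refl z⟩
      refine ge_of_tendsto hcz ?_
      filter_upwards [self_mem_nhdsWithin] with y hy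
      exact (hposl y hy.1 hy.2).le
    obtain ⟨d, hd, hdpos⟩ := eqpt z hzI (by linarith)
    have hev := aux_ev_lt_of_deriv_pos hd hdpos
    obtain ⟨y, hy1, hy2⟩ :=
      (hev.and (Ioo_mem_nhdsLT_of_mem (⟨hza', le_refl z⟩ : z ∈ Ioc a z))).exists
    have := hposl y hy2.1.le hy2.2
    replace hy1 : B₁ y - B₂ y < B₁ z - B₂ z := hy1
    linarith
  -- conclusion
  intro x hx
  rcases le_or_gt x a with h | h
  · have := stepB x ⟨hx.1, h⟩; linarith
  · have := stepC x ⟨h.le, hx.2⟩; linarith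
end
end
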